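/- For any group A and n ≥ 0, there is an isomorphism of right ℤ/p[A/A^(n)]-modules A^(n)/A^(n+1) ≅ H_1(A; ℤ/p[A/A^(n)]), where A acts on A^(n)/A^(n+1) by conjugation. -/

import Mathlib

open scoped commutatorElement


/-- The derived p-series: `G^(0) = G`, `G^(n+1) = [G^(n),G^(n)] (G^(n))^p`. -/
def derivedP (p : ℕ) (G : Type*) [Group G] : ℕ → Subgroup G
  | 0 => ⊤
  | n + 1 =>
      Subgroup.closure
        ({x | ∃ a ∈ derivedP p G n, ∃ b ∈ derivedP p G n, x = ⁅a, b⁆} ∪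
         {x | ∃ a ∈ derivedP p G n, x = a ^ p})

theorem derivedP_map_le {G H : Type*} [Group G] [Group H] (p : ℕ) (φ : G →* H) (n : ℕ) :
    (derivedP p G n).map φ ≤ derivedP p H n := by
  induction n with
  | zero => exact le_top
  | succ n ih =>
      rw [derivedP, derivedP, MonoidHom.map_closure]
      apply Subgroup.closure_mono
      rintro x ⟨y, hy | hy, rfl⟩
      · obtain ⟨a, ha, b, hb, rfl⟩ := hy
        exact Or.inl ⟨φ a, ih (Subgroup.mem_map_of_mem φ ha), φ b,
          ih (Subgroup.mem_map_of_mem φ hb), by simp [commutatorElement_def]⟩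
      · obtain ⟨a, ha, rfl⟩ := hy
        exact Or.inr ⟨φ a, ih (Subgroup.mem_map_of_mem φ ha), by simp⟩

instance derivedP_normal (p : ℕ) {G : Type*} [Group G] (n : ℕ) : (derivedP p G n).Normal := by
  constructor
  intro x hx g
  have := derivedP_map_le p (MulAut.conj g).toMonoidHom n (Subgroup.mem_map_of_mem _ hx)
  simpa using this

/-- The map `A/A^(n) → B/B^(n)` induced by `φ`. -/
def derivedPQuotMap {G H : Type*} [Group G] [Group H] (p : ℕ) (φ : G →* H) (n : ℕ) :
    G ⧸ derivedP p G n →* H ⧸ derivedP p H n :=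
  QuotientGroup.map _ _ φ (Subgroup.map_le_iff_le_comap.mp (derivedP_map_le p φ n))

section TwistedH1

open Finsupp

variable (p : ℕ) {A : Type*} [Group A] (n : ℕ)

/-- The quotient `Q = A/A^(n)`, over which the twisted coefficients live. -/
@[reducible] def derQ := A ⧸ derivedP p A n

/-- The coefficient ring `ℤ/p[A/A^(n)]`. -/
@[reducible] noncomputable def derM (A : Type*) [Group A] (n : ℕ) :=
  MonoidAlgebra (ZMod p) (A ⧸ derivedP p A n)

/-- Degree-1 differential of the bar complex of `A` with coefficients in the
`(ℤA, ℤ/p[A/A^(n)])`-bimodule `ℤ/p[A/A^(n)]`: `m·[g] ↦ m·g − m`. -/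
noncomputable def twD1 (A : Type*) [Group A] (n : ℕ) :
    (A →₀ derM p A n) →ₗ[ZMod p] derM p A n :=
  Finsupp.lsum (ZMod p) fun g =>
    LinearMap.mulRight (ZMod p)
        (MonoidAlgebra.of (ZMod p) (A ⧸ derivedP p A n) (QuotientGroup.mk g)) -
      LinearMap.id

/-- Degree-2 differential of the bar complex of `A` with coefficients in
`ℤ/p[A/A^(n)]`: `m·[g|h] ↦ (m·g)·[h] − m·[gh] + m·[g]`. -/
noncomputable def twD2 (A : Type*) [Group A] (n : ℕ) :
    ((A × A) →₀ derM p A n) →ₗ[ZMod p] (A →₀ derM p A n) :=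
  Finsupp.lsum (ZMod p) fun x =>
    (Finsupp.lsingle x.2).comp
        (LinearMap.mulRight (ZMod p)
          (MonoidAlgebra.of (ZMod p) (A ⧸ derivedP p A n) (QuotientGroup.mk x.1))) -
      Finsupp.lsingle (x.1 * x.2) + Finsupp.lsingle x.1

/-- `H_1(A; ℤ/p[A/A^(n)])`: 1-cycles modulo 1-boundaries of the bar complex with
coefficients in `ℤ/p[A/A^(n)]`, realized as the image of the cycles in the quotient of
the 1-chains by the boundaries. -/
@[reducible] noncomputable def twH1 (A : Type*) [Group A] (n : ℕ) :=
  ↥(Submodule.map (Submodule.mkQ (LinearMap.range (twD2 p A n)))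
      (LinearMap.ker (twD1 p A n)))

/-- Left multiplication by `q ∈ A/A^(n)` on the coefficients of the 1-chains: the
residual `ℤ/p[A/A^(n)]`-module structure on the bar complex. -/
noncomputable def twTau1 (q : A ⧸ derivedP p A n) :
    (A →₀ derM p A n) →ₗ[ZMod p] (A →₀ derM p A n) :=
  Finsupp.mapRange.linearMap
    (LinearMap.mulLeft (ZMod p) (MonoidAlgebra.of (ZMod p) (A ⧸ derivedP p A n) q))

lemma twD1_tau (q : A ⧸ derivedP p A n) :
    (twD1 p A n).comp (twTau1 p n q) =
      (LinearMap.mulLeft (ZMod p)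
        (MonoidAlgebra.of (ZMod p) (A ⧸ derivedP p A n) q)).comp (twD1 p A n) := by
  apply Finsupp.lhom_ext
  intro g m
  simp only [twD1, twTau1, LinearMap.coe_comp, Function.comp_apply,
    Finsupp.mapRange.linearMap_apply, Finsupp.mapRange_single, Finsupp.lsum_single,
    LinearMap.sub_apply, LinearMap.id_apply, LinearMap.mulRight_apply,
    LinearMap.mulLeft_apply, map_sub, mul_assoc]

lemma twD2_tau (q : A ⧸ derivedP p A n) :
    (twD2 p A n).comp
        (Finsupp.mapRange.linearMap
          (LinearMap.mulLeft (ZMod p) (MonoidAlgebra.of (ZMod p) (A ⧸ derivedP p A n) q))) =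
      (twTau1 p n q).comp (twD2 p A n) := by
  apply Finsupp.lhom_ext
  intro x m
  simp only [twD2, twTau1, LinearMap.coe_comp, Function.comp_apply,
    Finsupp.mapRange.linearMap_apply, Finsupp.mapRange_single, Finsupp.lsum_single,
    LinearMap.sub_apply, LinearMap.add_apply, LinearMap.mulRight_apply,
    LinearMap.mulLeft_apply, Finsupp.lsingle_apply, map_sub, map_add, mul_assoc]

/-- The action of `q ∈ A/A^(n)` on `H_1(A; ℤ/p[A/A^(n)])`: the
`ℤ/p[A/A^(n)]`-module structure of `H_1`. -/
noncomputable def twH1Act (q : A ⧸ derivedP p A n) :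
    twH1 p A n →ₗ[ZMod p] twH1 p A n :=
  (Submodule.mapQ (LinearMap.range (twD2 p A n)) (LinearMap.range (twD2 p A n))
      (twTau1 p n q)
      (by
        rintro y ⟨z, rfl⟩
        refine ⟨Finsupp.mapRange.linearMap
            (LinearMap.mulLeft (ZMod p) (MonoidAlgebra.of (ZMod p) (A ⧸ derivedP p A n) q)) z, ?_⟩
        have h := congrFun (congrArg DFunLike.coe (twD2_tau p n q)) z
        simp only [LinearMap.coe_comp, Function.comp_apply] at h
        exact h)).restrict
    (by
      rintro y ⟨w, hw, rfl⟩
      refine ⟨twTau1 p n q w, ?_, ?_⟩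
      · have h := congrFun (congrArg DFunLike.coe (twD1_tau p n q)) w
        simp only [LinearMap.coe_comp, Function.comp_apply] at h
        exact LinearMap.mem_ker.mpr
          (by rw [h, LinearMap.mem_ker.mp hw, map_zero])
      · rfl)

instance (p : ℕ) {A : Type*} [Group A] (n : ℕ) :
    ((derivedP p A (n + 1)).comap (derivedP p A n).subtype).Normal :=
  (derivedP_normal p (n + 1)).comap _

namespace DPH

variable (p : ℕ) {A : Type*} [Group A] (n : ℕ)

lemma derivedP_succ_le : derivedP p A (n + 1) ≤ derivedP p A n := by
  rw [derivedP]
  rw [Subgroup.closure_le]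
  rintro x (⟨a, ha, b, hb, rfl⟩ | ⟨a, ha, rfl⟩)
  · exact mul_mem (mul_mem (mul_mem ha hb) (inv_mem ha)) (inv_mem hb)
  · exact pow_mem ha p

lemma commutator_mem_succ {a b : A} (ha : a ∈ derivedP p A n) (hb : b ∈ derivedP p A n) :
    ⁅a, b⁆ ∈ derivedP p A (n + 1) := by
  rw [derivedP]
  exact Subgroup.subset_closure (Or.inl ⟨a, ha, b, hb, rfl⟩)

lemma pow_mem_succ {a : A} (ha : a ∈ derivedP p A n) :
    a ^ p ∈ derivedP p A (n + 1) := by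
  rw [derivedP]
  exact Subgroup.subset_closure (Or.inr ⟨a, ha, rfl⟩)

/-- the class in `(A →₀ M) ⧸ B` of the chain `m·[g]`. -/
noncomputable def fm (g : A) (m : derM p A n) :
    (A →₀ derM p A n) ⧸ LinearMap.range (twD2 p A n) :=
  Submodule.Quotient.mk (Finsupp.single g m)

lemma fm_rel (g h : A) (m : derM p A n) :
    fm p n h (m * MonoidAlgebra.single (QuotientGroup.mk g : A ⧸ derivedP p A n) 1)
      - fm p n (g * h) m + fm p n g m = 0 := by
  have : Finsupp.single h (m * MonoidAlgebra.single (QuotientGroup.mk g : A ⧸ derivedP p A n) 1)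
      - Finsupp.single (g * h) m + Finsupp.single g m
      ∈ LinearMap.range (twD2 p A n) := by
    refine ⟨Finsupp.single (g, h) m, ?_⟩
    simp [twD2, MonoidAlgebra.of_apply]
  rw [fm, fm, fm, ← Submodule.Quotient.mk_sub, ← Submodule.Quotient.mk_add]
  exact (Submodule.Quotient.mk_eq_zero _).2 this

lemma fm_mul (g h : A) (m : derM p A n) :
    fm p n (g * h) m
      = fm p n h (m * MonoidAlgebra.single (QuotientGroup.mk g : A ⧸ derivedP p A n) 1)
        + fm p n g m := by
  have h0 := fm_rel p n g h m
  have : fm p n h (m * MonoidAlgebra.single (QuotientGroup.mk g : A ⧸ derivedP p A n) 1)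
      + fm p n g m - fm p n (g * h) m = 0 := by rw [← h0]; abel
  exact (sub_eq_zero.mp this).symm

lemma fm_one (m : derM p A n) : fm p n 1 m = 0 := by
  have h0 := fm_rel p n 1 1 m
  simpa [← MonoidAlgebra.one_def] using h0

lemma fm_inv (g : A) (m : derM p A n) :
    fm p n g⁻¹ (m * MonoidAlgebra.single (QuotientGroup.mk g : A ⧸ derivedP p A n) 1)
      = - fm p n g m := by
  have h1 := fm_mul p n g g⁻¹ m
  rw [mul_inv_cancel, fm_one] at h1
  exact eq_neg_of_add_eq_zero_left h1.symm


lemma single_mk_eq_one {a : A} (ha : a ∈ derivedP p A n) :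
    MonoidAlgebra.single (QuotientGroup.mk a : A ⧸ derivedP p A n) (1 : ZMod p) = 1 := by
  rw [(QuotientGroup.eq_one_iff a).2 ha, MonoidAlgebra.one_def]

lemma fm_mul_left_mem {a b : A} (ha : a ∈ derivedP p A n) (m : derM p A n) :
    fm p n (a * b) m = fm p n b m + fm p n a m := by
  rw [fm_mul, single_mk_eq_one p n ha, mul_one]

lemma fm_inv_mem {a : A} (ha : a ∈ derivedP p A n) :
    fm p n a⁻¹ 1 = - fm p n a 1 := by
  have := fm_inv p n a 1
  rwa [single_mk_eq_one p n ha, mul_one] at this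

lemma fm_pow_mem {a : A} (ha : a ∈ derivedP p A n) (k : ℕ) :
    fm p n (a ^ k) 1 = k • fm p n a 1 := by
  induction k with
  | zero => simpa using fm_one p n 1
  | succ k ih =>
      rw [pow_succ, fm_mul_left_mem p n (pow_mem ha k), ih, succ_nsmul, add_comm]

lemma fm_eq_zero_of_mem_succ {a : A} (ha : a ∈ derivedP p A (n + 1)) :
    fm p n a 1 = 0 := by
  rw [derivedP] at ha
  induction ha using Subgroup.closure_induction with
  | mem x hx =>
      rcases hx with ⟨u, hu, v, hv, rfl⟩ | ⟨u, hu, rfl⟩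
      · have hu' : u⁻¹ ∈ derivedP p A n := inv_mem hu
        have hv' : v⁻¹ ∈ derivedP p A n := inv_mem hv
        rw [commutatorElement_def, mul_assoc, mul_assoc,
          fm_mul_left_mem p n hu, fm_mul_left_mem p n hv,
          fm_mul_left_mem p n hu', fm_inv_mem p n hu, fm_inv_mem p n hv]
        abel
      · rw [fm_pow_mem p n hu, ← Nat.cast_smul_eq_nsmul (ZMod p), ZMod.natCast_self,
          zero_smul]
  | one => exact fm_one p n 1
  | mul x y hx hy ihx ihy =>
      have hx' : x ∈ derivedP p A n := derivedP_succ_le p n (by rwa [derivedP])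
      rw [fm_mul_left_mem p n hx', ihx, ihy, add_zero]
  | inv x hx ihx =>
      have hx' : x ∈ derivedP p A n := derivedP_succ_le p n (by rwa [derivedP])
      rw [fm_inv_mem p n hx', ihx, neg_zero]

instance commGroupQuot :
    CommGroup (↥(derivedP p A n) ⧸
      ((derivedP p A (n + 1)).comap (derivedP p A n).subtype)) :=
  { (inferInstance : Group _) with
    mul_comm := by
      intro a b
      induction a using QuotientGroup.induction_on with
      | H x =>
        induction b using QuotientGroup.induction_on with
        | H y =>
          rw [← QuotientGroup.mk_mul, ← QuotientGroup.mk_mul, QuotientGroup.eq]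
          show (((x * y)⁻¹ * (y * x) : ↥(derivedP p A n)) : A) ∈ derivedP p A (n + 1)
          have : (((x * y)⁻¹ * (y * x) : ↥(derivedP p A n)) : A)
              = ⁅(y : A)⁻¹, (x : A)⁻¹⁆ := by
            push_cast
            rw [commutatorElement_def]
            group
          rw [this]
          exact commutator_mem_succ p n (inv_mem y.2) (inv_mem x.2) }

lemma torsionV (v : Additive (↥(derivedP p A n) ⧸
      ((derivedP p A (n + 1)).comap (derivedP p A n).subtype))) : p • v = 0 := by
  obtain ⟨x, hx⟩ := QuotientGroup.mk_surjective (Additive.toMul v)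
  have hv : v = Additive.ofMul (QuotientGroup.mk x) := by rw [hx]; rfl
  rw [hv, ← ofMul_pow]
  have hmem : (QuotientGroup.mk x : ↥(derivedP p A n) ⧸
      ((derivedP p A (n + 1)).comap (derivedP p A n).subtype)) ^ p = 1 := by
    rw [← QuotientGroup.mk_pow, QuotientGroup.eq_one_iff]
    show ((x ^ p : ↥(derivedP p A n)) : A) ∈ derivedP p A (n + 1)
    rw [SubmonoidClass.coe_pow]
    exact pow_mem_succ p n x.2
  rw [hmem]
  rfl

noncomputable instance moduleV : Module (ZMod p)
    (Additive (↥(derivedP p A n) ⧸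
      ((derivedP p A (n + 1)).comap (derivedP p A n).subtype))) :=
  AddCommGroup.zmodModule (torsionV p n)
open scoped Classical in
/-- a set-theoretic section of `A → A/A^(n)` sending `1` to `1`. -/
noncomputable def sec (q : A ⧸ derivedP p A n) : A :=
  if q = 1 then 1 else q.out

lemma sec_one : sec p n (1 : A ⧸ derivedP p A n) = 1 := by
  rw [sec, if_pos rfl]

lemma mk_sec (q : A ⧸ derivedP p A n) : (QuotientGroup.mk (sec p n q) : A ⧸ derivedP p A n) = q := by
  rw [sec]
  split_ifs with h
  · rw [h]; rfl
  · exact QuotientGroup.out_eq' q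

lemma w_mem (g : A) (q : A ⧸ derivedP p A n) :
    sec p n q * g * (sec p n (q * QuotientGroup.mk g))⁻¹ ∈ derivedP p A n := by
  rw [← QuotientGroup.eq_one_iff, QuotientGroup.mk_mul, QuotientGroup.mk_mul,
    QuotientGroup.mk_inv, mk_sec, mk_sec]
  group

/-- `w g q = [s(q) g s(q ḡ)⁻¹] ∈ N/A^(n+1)`. -/
noncomputable def w (g : A) (q : A ⧸ derivedP p A n) :
    Additive (↥(derivedP p A n) ⧸
      ((derivedP p A (n + 1)).comap (derivedP p A n).subtype)) :=
  Additive.ofMul (QuotientGroup.mk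
    (⟨sec p n q * g * (sec p n (q * QuotientGroup.mk g))⁻¹, w_mem p n g q⟩ :
      ↥(derivedP p A n)))

/-- the 1-chain-level inverse map `ψ : C₁ → N/A^(n+1)`. -/
noncomputable def psi : (A →₀ derM p A n) →ₗ[ZMod p]
    Additive (↥(derivedP p A n) ⧸
      ((derivedP p A (n + 1)).comap (derivedP p A n).subtype)) :=
  Finsupp.lsum (ZMod p) fun g =>
    ((Finsupp.lsum (ZMod p) fun q => LinearMap.toSpanSingleton (ZMod p) _ (w p n g q)).comp
      (MonoidAlgebra.coeffLinearEquiv (ZMod p)).toLinearMap :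
      derM p A n →ₗ[ZMod p] _)

lemma psi_single (g : A) (q : A ⧸ derivedP p A n) (c : ZMod p) :
    psi p n (Finsupp.single g (MonoidAlgebra.single q c)) = c • w p n g q := by
  rw [psi, Finsupp.lsum_single]
  exact Finsupp.lsum_single (ZMod p) _ _ _
lemma twD2_single (g h : A) (m : derM p A n) :
    twD2 p A n (Finsupp.single (g, h) m)
      = Finsupp.single h (m * MonoidAlgebra.single (QuotientGroup.mk g : A ⧸ derivedP p A n) 1)
        - Finsupp.single (g * h) m + Finsupp.single g m := by
  simp [twD2, MonoidAlgebra.of_apply]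

lemma twD1_single (g : A) (m : derM p A n) :
    twD1 p A n (Finsupp.single g m)
      = m * MonoidAlgebra.single (QuotientGroup.mk g : A ⧸ derivedP p A n) 1 - m := by
  simp [twD1, MonoidAlgebra.of_apply]

lemma w_cocycle (g h : A) (q : A ⧸ derivedP p A n) :
    w p n h (q * QuotientGroup.mk g) - w p n (g * h) q + w p n g q = 0 := by
  have key : ((⟨sec p n q * g * (sec p n (q * QuotientGroup.mk g))⁻¹, w_mem p n g q⟩ :
        ↥(derivedP p A n)) *
      ⟨sec p n (q * QuotientGroup.mk g) * h *
        (sec p n (q * QuotientGroup.mk g * QuotientGroup.mk h))⁻¹, w_mem p n h _⟩)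
      = ⟨sec p n q * (g * h) * (sec p n (q * QuotientGroup.mk (g * h)))⁻¹,
          w_mem p n (g * h) q⟩ := by
    apply Subtype.ext
    show sec p n q * g * (sec p n (q * QuotientGroup.mk g))⁻¹ *
        (sec p n (q * QuotientGroup.mk g) * h *
          (sec p n (q * QuotientGroup.mk g * QuotientGroup.mk h))⁻¹)
      = sec p n q * (g * h) * (sec p n (q * QuotientGroup.mk (g * h)))⁻¹
    rw [QuotientGroup.mk_mul, ← mul_assoc q]
    group
  have hsum : w p n h (q * QuotientGroup.mk g) + w p n g q = w p n (g * h) q := by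
    rw [w, w, w, ← ofMul_mul, mul_comm, ← QuotientGroup.mk_mul, key]
  rw [← hsum]; abel

lemma psi_d2 : (psi p n) ∘ₗ twD2 p A n = 0 := by
  apply Finsupp.lhom_ext'
  intro x
  apply MonoidAlgebra.lhom_ext'
  intro q
  apply LinearMap.ext_ring
  show psi p n (twD2 p A n (Finsupp.single x (MonoidAlgebra.single q 1))) = 0
  obtain ⟨g, h⟩ := x
  rw [twD2_single, map_add, map_sub, MonoidAlgebra.single_mul_single, mul_one,
    psi_single, psi_single, psi_single, one_smul, one_smul, one_smul]
  exact w_cocycle p n g h q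

lemma range_d2_le_ker_psi :
    LinearMap.range (twD2 p A n) ≤ LinearMap.ker (psi p n) := by
  rintro _ ⟨c, rfl⟩
  have := congrFun (congrArg DFunLike.coe (psi_d2 p n)) c
  exact LinearMap.mem_ker.mpr this

/-- `ψ` descends to the quotient by boundaries. -/
noncomputable def PsiQ : ((A →₀ derM p A n) ⧸ LinearMap.range (twD2 p A n)) →ₗ[ZMod p]
    Additive (↥(derivedP p A n) ⧸
      ((derivedP p A (n + 1)).comap (derivedP p A n).subtype)) :=
  Submodule.liftQ _ (psi p n) (range_d2_le_ker_psi p n)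
set_option synthInstance.maxHeartbeats 1000000
set_option maxHeartbeats 1000000

lemma fm_mem_H (x : ↥(derivedP p A n)) : fm p n ↑x 1 ∈
    Submodule.map (Submodule.mkQ (LinearMap.range (twD2 p A n)))
      (LinearMap.ker (twD1 p A n)) := by
  refine ⟨Finsupp.single ↑x 1, ?_, rfl⟩
  show Finsupp.single (↑x : A) 1 ∈ LinearMap.ker (twD1 p A n)
  rw [LinearMap.mem_ker, twD1_single, single_mk_eq_one p n x.2, mul_one, sub_self]

/-- `x ↦ [1·[x]]` as a monoid hom `N →* Multiplicative H₁`. -/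
noncomputable def fmulhom : ↥(derivedP p A n) →* Multiplicative (twH1 p A n) :=
  MonoidHom.mk' (fun x => Multiplicative.ofAdd ⟨fm p n ↑x 1, fm_mem_H p n x⟩)
    (by
      intro x y
      apply congrArg Multiplicative.ofAdd
      apply Subtype.ext
      have h1 : fm p n (↑(x * y) : A) 1 = fm p n (↑x : A) 1 + fm p n (↑y : A) 1 := by
        show fm p n ((↑x : A) * (↑y : A)) 1 = _
        rw [fm_mul_left_mem p n x.2, add_comm]
      simp only [toAdd_ofAdd, Submodule.coe_add]
      exact h1)

lemma fmulhom_ker : ∀ x ∈ (derivedP p A (n + 1)).comap (derivedP p A n).subtype,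
    fmulhom p n x = 1 := by
  intro x hx
  apply congrArg Multiplicative.ofAdd
  apply Subtype.ext
  exact fm_eq_zero_of_mem_succ p n hx

/-- the forward map `N/A^(n+1) → H₁` as an additive hom. -/
noncomputable def Phi : Additive (↥(derivedP p A n) ⧸
      ((derivedP p A (n + 1)).comap (derivedP p A n).subtype)) →+ twH1 p A n :=
  AddMonoidHom.mk'
    (fun v => Multiplicative.toAdd
      (QuotientGroup.lift _ (fmulhom p n) (fun x hx => (fmulhom p n).mem_ker.mpr (fmulhom_ker p n x hx)) (Additive.toMul v)))
    (by intro a b; simp only [toMul_add, map_mul]; rfl)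

lemma Phi_mk (x : ↥(derivedP p A n)) :
    Phi p n (Additive.ofMul (QuotientGroup.mk x)) = ⟨fm p n ↑x 1, fm_mem_H p n x⟩ := by
  show Multiplicative.toAdd (QuotientGroup.lift _ (fmulhom p n) (fun x hx => (fmulhom p n).mem_ker.mpr (fmulhom_ker p n x hx))
    (QuotientGroup.mk x)) = _
  rw [QuotientGroup.lift_mk]
  rfl
noncomputable def PsiH : twH1 p A n →+ Additive (↥(derivedP p A n) ⧸
      ((derivedP p A (n + 1)).comap (derivedP p A n).subtype)) :=
  ((PsiQ p n).comp (Submodule.subtype _)).toAddMonoidHom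

lemma w_self (x : ↥(derivedP p A n)) :
    w p n (↑x : A) 1 = Additive.ofMul (QuotientGroup.mk x) := by
  have hx : (QuotientGroup.mk (↑x : A) : A ⧸ derivedP p A n) = 1 :=
    (QuotientGroup.eq_one_iff _).2 x.2
  have : (⟨sec p n (1 : A ⧸ derivedP p A n) * ↑x *
      (sec p n ((1 : A ⧸ derivedP p A n) * QuotientGroup.mk (↑x : A)))⁻¹,
      w_mem p n (↑x : A) 1⟩ : ↥(derivedP p A n)) = x := by
    apply Subtype.ext
    show sec p n (1 : A ⧸ derivedP p A n) * ↑x *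
      (sec p n ((1 : A ⧸ derivedP p A n) * QuotientGroup.mk (↑x : A)))⁻¹ = (↑x : A)
    rw [hx, mul_one, sec_one, one_mul, inv_one, mul_one]
  rw [w, this]

lemma PsiH_Phi (x : ↥(derivedP p A n)) :
    PsiH p n (Phi p n (Additive.ofMul (QuotientGroup.mk x)))
      = Additive.ofMul (QuotientGroup.mk x) := by
  rw [Phi_mk]
  have hs : PsiH p n ⟨fm p n (↑x : A) 1, fm_mem_H p n x⟩ = PsiQ p n (fm p n (↑x : A) 1) := rfl
  rw [hs]
  have hq : PsiQ p n (fm p n (↑x : A) 1) = psi p n (Finsupp.single (↑x : A) 1) :=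
    Submodule.liftQ_apply _ _ _
  rw [hq]
  have h1 : (1 : derM p A n) = MonoidAlgebra.single (1 : A ⧸ derivedP p A n) 1 :=
    MonoidAlgebra.one_def
  rw [h1, psi_single, one_smul, w_self]

noncomputable def etaLin : Additive (↥(derivedP p A n) ⧸
      ((derivedP p A (n + 1)).comap (derivedP p A n).subtype)) →ₗ[ZMod p]
      ((A →₀ derM p A n) ⧸ LinearMap.range (twD2 p A n)) :=
  { toFun := fun v => ((Phi p n v : twH1 p A n) :
      (A →₀ derM p A n) ⧸ LinearMap.range (twD2 p A n)),
    map_add' := by intro a b; rw [map_add, Submodule.coe_add],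
    map_smul' := by
      intro c v
      exact ZMod.map_smul
        (((Submodule.map (Submodule.mkQ (LinearMap.range (twD2 p A n)))
            (LinearMap.ker (twD1 p A n))).subtype.toAddMonoidHom).comp (Phi p n)) c v }

lemma etaLin_ofMul (x : ↥(derivedP p A n)) :
    etaLin p n (Additive.ofMul (QuotientGroup.mk x)) = fm p n ↑x 1 := by
  have h := Phi_mk p n x
  calc etaLin p n (Additive.ofMul (QuotientGroup.mk x))
      = ((Phi p n (Additive.ofMul (QuotientGroup.mk x)) : twH1 p A n) :
          (A →₀ derM p A n) ⧸ LinearMap.range (twD2 p A n)) := rfl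
    _ = fm p n ↑x 1 := by rw [h]

noncomputable def Gam : derM p A n →ₗ[ZMod p]
    ((A →₀ derM p A n) ⧸ LinearMap.range (twD2 p A n)) :=
  ((Finsupp.lsum (ZMod p) fun q => LinearMap.toSpanSingleton (ZMod p) _ (fm p n (sec p n q) 1)).comp
    (MonoidAlgebra.coeffLinearEquiv (ZMod p)).toLinearMap :
    derM p A n →ₗ[ZMod p] _)

lemma Gam_single (q : A ⧸ derivedP p A n) (c : ZMod p) :
    Gam p n (MonoidAlgebra.single q c) = c • fm p n (sec p n q) 1 :=
  Finsupp.lsum_single (ZMod p) _ _ _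

lemma fm_w (g : A) (q : A ⧸ derivedP p A n) :
    fm p n (sec p n q * g * (sec p n (q * QuotientGroup.mk g))⁻¹) 1
      = fm p n g (MonoidAlgebra.single q 1) + fm p n (sec p n q) 1
        - fm p n (sec p n (q * QuotientGroup.mk g)) 1 := by
  rw [mul_assoc (sec p n q), fm_mul p n (sec p n q) _ 1, mk_sec, one_mul,
    fm_mul p n g _ (MonoidAlgebra.single q 1), MonoidAlgebra.single_mul_single, mul_one]
  have h3 : fm p n (sec p n (q * QuotientGroup.mk g))⁻¹
      (MonoidAlgebra.single (q * QuotientGroup.mk g) 1)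
      = - fm p n (sec p n (q * QuotientGroup.mk g)) 1 := by
    have h := fm_inv p n (sec p n (q * QuotientGroup.mk g)) 1
    rwa [mk_sec, one_mul] at h
  rw [h3]
  abel

lemma eta_psi : (etaLin p n) ∘ₗ psi p n
    = Submodule.mkQ _ + (Gam p n) ∘ₗ (-(twD1 p A n)) := by
  apply Finsupp.lhom_ext'
  intro g
  apply MonoidAlgebra.lhom_ext'
  intro q
  apply LinearMap.ext_ring
  show etaLin p n (psi p n (Finsupp.single g (MonoidAlgebra.single q (1 : ZMod p))))
    = Submodule.mkQ _ (Finsupp.single g (MonoidAlgebra.single q (1 : ZMod p)))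
      + Gam p n (-(twD1 p A n (Finsupp.single g (MonoidAlgebra.single q (1 : ZMod p)))))
  rw [psi_single, one_smul, w, etaLin_ofMul, fm_w, twD1_single,
    MonoidAlgebra.single_mul_single, mul_one, neg_sub, map_sub, Gam_single, Gam_single,
    one_smul, one_smul]
  show _ = fm p n g (MonoidAlgebra.single q 1) + _
  abel

lemma eta_psi_cycle {z : A →₀ derM p A n} (hz : z ∈ LinearMap.ker (twD1 p A n)) :
    etaLin p n (psi p n z) = Submodule.Quotient.mk z := by
  have h := congrFun (congrArg DFunLike.coe (eta_psi p n)) z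
  simp only [LinearMap.coe_comp, Function.comp_apply, LinearMap.add_apply,
    LinearMap.neg_apply] at h
  rw [LinearMap.mem_ker.mp hz, neg_zero, map_zero, add_zero] at h
  exact h

lemma Phi_PsiH (h : twH1 p A n) : Phi p n (PsiH p n h) = h := by
  obtain ⟨c, hc⟩ := h
  obtain ⟨z, hz, hzc⟩ := hc
  apply Subtype.ext
  show etaLin p n (PsiH p n ⟨c, _⟩) = c
  have : PsiH p n ⟨c, ⟨z, hz, hzc⟩⟩ = psi p n z := by
    show PsiQ p n c = psi p n z
    rw [← hzc]
    exact Submodule.liftQ_apply _ _ _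
  rw [this, eta_psi_cycle p n hz, ← hzc]
  rfl
lemma fm_def (g : A) (m : derM p A n) :
    fm p n g m = Submodule.Quotient.mk (Finsupp.single g m) := rfl

lemma fm_conj (a : A) (x : ↥(derivedP p A n)) :
    fm p n (a * ↑x * a⁻¹) 1
      = fm p n ↑x (MonoidAlgebra.single (QuotientGroup.mk a : A ⧸ derivedP p A n) 1) := by
  rw [mul_assoc, fm_mul p n a ((↑x : A) * a⁻¹) 1, one_mul,
    fm_mul p n (↑x : A) a⁻¹ _, single_mk_eq_one p n x.2, mul_one]
  have h := fm_inv p n a 1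
  rw [one_mul] at h
  rw [h]
  abel

lemma left_comp : (PsiH p n).comp (Phi p n) = AddMonoidHom.id (Additive (↥(derivedP p A n) ⧸
      ((derivedP p A (n + 1)).comap (derivedP p A n).subtype))) := by
  apply AddMonoidHom.ext
  intro v
  obtain ⟨x, hx⟩ := QuotientGroup.mk_surjective (Additive.toMul v)
  have hv : v = Additive.ofMul (QuotientGroup.mk x) := by rw [hx]; rfl
  rw [hv]
  exact PsiH_Phi p n x

lemma right_comp : (Phi p n).comp (PsiH p n) = AddMonoidHom.id (twH1 p A n) := by
  apply AddMonoidHom.ext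
  intro h
  exact Phi_PsiH p n h

/-- the isomorphism. -/
noncomputable def E : Additive (↥(derivedP p A n) ⧸
      ((derivedP p A (n + 1)).comap (derivedP p A n).subtype)) ≃+ twH1 p A n :=
  AddMonoidHom.toAddEquiv (Phi p n) (PsiH p n) (left_comp p n) (right_comp p n)

lemma E_apply (v : Additive (↥(derivedP p A n) ⧸
      ((derivedP p A (n + 1)).comap (derivedP p A n).subtype))) :
    E p n v = Phi p n v := rfl

lemma equivariant (a : A) (x : ↥(derivedP p A n)) :
    Phi p n (Additive.ofMul (QuotientGroup.mk
        (⟨a * ↑x * a⁻¹, (derivedP_normal p n).conj_mem ↑x x.2 a⟩ : ↥(derivedP p A n))))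
      = twH1Act p n (QuotientGroup.mk a)
          (Phi p n (Additive.ofMul (QuotientGroup.mk x))) := by
  rw [Phi_mk, Phi_mk]
  apply Subtype.ext
  have htau : twTau1 p n (QuotientGroup.mk a) (Finsupp.single (↑x : A) 1)
      = Finsupp.single (↑x : A)
          (MonoidAlgebra.single (QuotientGroup.mk a : A ⧸ derivedP p A n) 1) := by
    simp [twTau1, MonoidAlgebra.of_apply, MonoidAlgebra.single_mul_single]
  show fm p n (a * ↑x * a⁻¹) 1 = _
  conv_rhs => rw [twH1Act, LinearMap.restrict_coe_apply]
  have hcoe : ((⟨fm p n (↑x : A) 1, fm_mem_H p n x⟩ : twH1 p A n) :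
      (A →₀ derM p A n) ⧸ LinearMap.range (twD2 p A n))
      = Submodule.Quotient.mk (Finsupp.single (↑x : A) 1) := rfl
  rw [hcoe, Submodule.mapQ_apply, htau, fm_conj p n a x]
  rfl

end DPH

set_option synthInstance.maxHeartbeats 1000000 in
set_option maxHeartbeats 1000000 in
/-- `A^(n)/A^(n+1) ≅ H_1(A; ℤ/p[A/A^(n)])` as `ℤ/p[A/A^(n)]`-modules,
where `A` acts on `A^(n)/A^(n+1)` by conjugation: there is an additive equivalence
intertwining the conjugation action with the `A/A^(n)`-action on `H_1` (and hence, as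
group elements span the group algebra, an equivalence of modules). -/
theorem derivedP_succ_quotient_equiv_twisted_H1 (p : ℕ) (hp : p.Prime)
    {A : Type*} [Group A] (n : ℕ) :
    ∃ e : Additive (↥(derivedP p A n) ⧸
        ((derivedP p A (n + 1)).comap (derivedP p A n).subtype)) ≃+ twH1 p A n,
      ∀ (a : A) (x : ↥(derivedP p A n)),
        e (Additive.ofMul (QuotientGroup.mk
            (⟨a * ↑x * a⁻¹, (derivedP_normal p n).conj_mem ↑x x.2 a⟩ : ↥(derivedP p A n)))) =
          twH1Act p n (QuotientGroup.mk a)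
            (e (Additive.ofMul (QuotientGroup.mk x))) := by
  refine ⟨DPH.E p n, ?_⟩
  intro a x
  rw [DPH.E_apply, DPH.E_apply]
  exact DPH.equivariant p n a x

end TwistedH1
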